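/- Let z be a maximizer of ⟨c, y⟩ over {y : ‖y‖ = r, 0 ≤ yⱼ ≤ aⱼ ∀j} where r ∈ [rᵢ, r_{i+1}]. Then z_{τⱼ} = a_{τⱼ} for all j = 1,…,i; that is, the i coordinates with the largest ratios φⱼ = cⱼ/aⱼ are saturated at their upper bounds. -/

import Mathlib

set_option maxHeartbeats 1000000 in
/-- Auxiliary exchange lemma: if coordinate `p` (value `zp`, bound `ap`,
weight `cp`) is unsaturated and coordinate `q` (value `zq`, weight `cq`)
carries a lot of mass relative to its weight, then mass can be moved from
`q` to `p`, preserving the sum of squares, staying feasible, and strictly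
increasing the objective. -/
lemma stmt3_aux_exchange (ap cp cq zp zq φ : ℝ)
    (hap : 0 < ap) (hcp : 0 < cp) (hcq : 0 < cq)
    (hzp0 : 0 ≤ zp) (hzp_lt : zp < ap) (hzq0 : 0 ≤ zq)
    (hφpos : 0 < φ)
    (hk : φ⁻¹ ^ 2 * cq ^ 2 < zq ^ 2)
    (hcp_ge : φ * ap ≤ cp) :
    ∃ yp yq : ℝ, yp ^ 2 + yq ^ 2 = zp ^ 2 + zq ^ 2 ∧ 0 ≤ yp ∧ yp ≤ ap ∧
      0 ≤ yq ∧ yq ≤ zq ∧ cp * zp + cq * zq < cp * yp + cq * yq := by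
  have hφinv : 0 < φ⁻¹ := inv_pos.mpr hφpos
  have hzq_big : φ⁻¹ * cq < zq := by nlinarith [mul_pos hφinv hcq]
  have hzq_pos : 0 < zq := lt_trans (mul_pos hφinv hcq) hzq_big
  have hδ : 0 < cp * zq - cq * zp := by
    have h1 : cp * (φ⁻¹ * cq) < cp * zq := mul_lt_mul_of_pos_left hzq_big hcp
    have h2 : ap ≤ φ⁻¹ * cp := by
      rw [← div_eq_inv_mul, le_div_iff₀ hφpos, mul_comm]
      exact hcp_ge
    have h3 : ap * cq ≤ (φ⁻¹ * cp) * cq := mul_le_mul_of_nonneg_right h2 hcq.le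
    have h4 : zp * cq < ap * cq := mul_lt_mul_of_pos_right hzp_lt hcq
    nlinarith [h1, h3, h4]
  obtain ⟨δ, hδdef⟩ : ∃ δ : ℝ, δ = cp * zq - cq * zp := ⟨_, rfl⟩
  rw [← hδdef] at hδ
  have hcpq : 0 < cp + cq := by linarith
  obtain ⟨η, hηdef⟩ : ∃ η : ℝ, η = δ / (cp + cq) := ⟨_, rfl⟩
  have hη : 0 < η := hηdef ▸ div_pos hδ hcpq
  have hηδ : η * (cp + cq) = δ := by rw [hηdef]; exact div_mul_cancel₀ δ hcpq.ne'
  have hη_lt : η < zq := by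
    have h : δ < zq * (cp + cq) := by
      rw [hδdef]
      nlinarith [mul_pos hcq hzq_pos, mul_nonneg hcq.le hzp0]
    have h2 : η * (cp + cq) < zq * (cp + cq) := by rw [hηδ]; exact h
    exact lt_of_mul_lt_mul_right h2 hcpq.le
  obtain ⟨s, hsdef⟩ : ∃ s : ℝ,
      s = min (min (η ^ 2) (η * zq)) (min (zq ^ 2) ((ap - zp) ^ 2)) := ⟨_, rfl⟩
  have hs0 : 0 < s := by
    rw [hsdef]
    apply lt_min (lt_min (by positivity) (by positivity))
      (lt_min (by positivity) (by nlinarith))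
  have hs1 : s ≤ η ^ 2 := hsdef ▸ le_trans (min_le_left _ _) (min_le_left _ _)
  have hs2 : s ≤ η * zq := hsdef ▸ le_trans (min_le_left _ _) (min_le_right _ _)
  have hs3 : s ≤ zq ^ 2 := hsdef ▸ le_trans (min_le_right _ _) (min_le_left _ _)
  have hs4 : s ≤ (ap - zp) ^ 2 := hsdef ▸ le_trans (min_le_right _ _) (min_le_right _ _)
  refine ⟨Real.sqrt (zp ^ 2 + s), Real.sqrt (zq ^ 2 - s), ?_, Real.sqrt_nonneg _, ?_,
    Real.sqrt_nonneg _, ?_, ?_⟩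
  · rw [Real.sq_sqrt (by positivity), Real.sq_sqrt (by nlinarith)]; ring
  · have hsq : Real.sqrt s ≤ ap - zp := by
      have := Real.sqrt_le_sqrt hs4
      rwa [Real.sqrt_sq (by linarith)] at this
    have h := Real.sqrt_le_sqrt (show zp ^ 2 + s ≤ (zp + Real.sqrt s) ^ 2 by
      nlinarith [Real.sq_sqrt hs0.le, Real.sqrt_nonneg s])
    rw [Real.sqrt_sq (by positivity)] at h
    linarith
  · have := Real.sqrt_le_sqrt (show zq ^ 2 - s ≤ zq ^ 2 by linarith)
    rwa [Real.sqrt_sq hzq_pos.le] at this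
  · obtain ⟨yp, hypdef⟩ : ∃ yp : ℝ, yp = Real.sqrt (zp ^ 2 + s) := ⟨_, rfl⟩
    obtain ⟨yq, hyqdef⟩ : ∃ yq : ℝ, yq = Real.sqrt (zq ^ 2 - s) := ⟨_, rfl⟩
    rw [← hypdef, ← hyqdef]
    have hyp2 : yp ^ 2 = zp ^ 2 + s := by
      rw [hypdef]; exact Real.sq_sqrt (by positivity)
    have hyq2 : yq ^ 2 = zq ^ 2 - s := by
      rw [hyqdef]; exact Real.sq_sqrt (by nlinarith [hs3, sq_nonneg zq])
    have hyp0 : 0 ≤ yp := hypdef ▸ Real.sqrt_nonneg _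
    have hyq0 : 0 ≤ yq := hyqdef ▸ Real.sqrt_nonneg _
    have hsqrts_η : Real.sqrt s ≤ η := by
      have := Real.sqrt_le_sqrt hs1
      rwa [Real.sqrt_sq hη.le] at this
    have hyp_le : yp ≤ zp + η := by
      rw [hypdef]
      have h := Real.sqrt_le_sqrt (show zp ^ 2 + s ≤ (zp + Real.sqrt s) ^ 2 by
        nlinarith [Real.sq_sqrt hs0.le, Real.sqrt_nonneg s])
      rw [Real.sqrt_sq (by positivity)] at h
      linarith [hsqrts_η]
    have hyq_ge : zq - η ≤ yq := by
      rw [hyqdef, Real.le_sqrt (by linarith) (by nlinarith)]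
      nlinarith [hs2, hη_lt, hη]
    have hyp_pos : 0 < yp := by nlinarith [hyp2, hs0, sq_nonneg zp]
    have d1 : 0 < yp + zp := by linarith
    have d2 : 0 < zq + yq := by linarith
    have h1g : cp * (2 * zq - η) ≤ cp * (zq + yq) :=
      mul_le_mul_of_nonneg_left (by linarith) hcp.le
    have h2g : cq * (yp + zp) ≤ cq * (2 * zp + η) :=
      mul_le_mul_of_nonneg_left (by linarith) hcq.le
    have h3g : δ ≤ cp * (zq + yq) - cq * (yp + zp) := by
      rw [hδdef] at hηδ ⊢
      nlinarith [h1g, h2g, hηδ]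
    have h4g : 0 < (cp * (zq + yq) - cq * (yp + zp)) * s :=
      mul_pos (lt_of_lt_of_le hδ h3g) hs0
    have h5g : (cp * yp + cq * yq - (cp * zp + cq * zq)) * ((yp + zp) * (zq + yq)) =
        (cp * (zq + yq) - cq * (yp + zp)) * s := by
      linear_combination (cp * (zq + yq)) * hyp2 + (cq * (yp + zp)) * hyq2
    nlinarith [h4g, h5g, mul_pos d1 d2]


/-- saturation lemma: If `z` maximizes `⟨c,y⟩` over the
intersection of the sphere `‖y‖ = r` with the box `0 ≤ y ≤ a`, where
`r ∈ [rᵢ, r_{i+1}]`, then the `i` coordinates with the largest ratios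
`φⱼ = cⱼ/aⱼ` are saturated: `z_{τⱼ} = a_{τⱼ}` for `j = 1,…,i`
(0-based: `z (τ m) = a (τ m)` for `m < i`). -/
theorem stmt_3 (R : ℕ) (hR : 1 ≤ R) (a c : Fin R → ℝ)
    (ha : ∀ j, 0 < a j) (hc : ∀ j, 0 < c j) (τ : Equiv.Perm (Fin R))
    (hord : ∀ i j : Fin R, i ≤ j → c (τ j) / a (τ j) ≤ c (τ i) / a (τ i))
    (rseq : ℕ → ℝ)
    (hr0 : rseq 0 = 0)
    (hri : ∀ i, 1 ≤ i → (hiR : i ≤ R) → rseq i =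
      Real.sqrt ((c (τ ⟨i - 1, by omega⟩) / a (τ ⟨i - 1, by omega⟩))⁻¹ ^ 2 *
          (∑ m ∈ Finset.univ.filter (fun m : Fin R => i ≤ (m : ℕ)), (c (τ m)) ^ 2) +
        ∑ m ∈ Finset.univ.filter (fun m : Fin R => (m : ℕ) < i), (a (τ m)) ^ 2))
    (i : ℕ) (hi : i < R) (r : ℝ)
    (hrlo : rseq i ≤ r) (hrhi : r ≤ rseq (i + 1))
    (z : Fin R → ℝ)
    (hz_sphere : ∑ j, (z j) ^ 2 = r ^ 2)
    (hz_box : ∀ j, 0 ≤ z j ∧ z j ≤ a j)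
    (hz_max : ∀ y : Fin R → ℝ, (∑ j, (y j) ^ 2 = r ^ 2) →
      (∀ j, 0 ≤ y j ∧ y j ≤ a j) → ∑ j, c j * y j ≤ ∑ j, c j * z j) :
    ∀ m : Fin R, (m : ℕ) < i → z (τ m) = a (τ m) := by
  intro m hm
  by_contra hne
  have hi1 : 1 ≤ i := by omega
  set p : Fin R := τ m with hp
  have hzp_lt : z p < a p := lt_of_le_of_ne (hz_box p).2 hne
  have hzp0 : 0 ≤ z p := (hz_box p).1
  set j1 : Fin R := ⟨i - 1, by omega⟩ with hj1
  set φ : ℝ := c (τ j1) / a (τ j1) with hφdef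
  have hφpos : 0 < φ := div_pos (hc _) (ha _)
  set Sc : ℝ := ∑ m ∈ Finset.univ.filter (fun m : Fin R => i ≤ (m : ℕ)), (c (τ m)) ^ 2 with hSc
  set Sa : ℝ := ∑ m ∈ Finset.univ.filter (fun m : Fin R => (m : ℕ) < i), (a (τ m)) ^ 2 with hSa
  -- r² ≥ φ⁻² Sc + Sa
  have hA0 : (0:ℝ) ≤ φ⁻¹ ^ 2 * Sc + Sa := by
    have h1 : (0:ℝ) ≤ Sc := Finset.sum_nonneg fun _ _ => sq_nonneg _
    have h2 : (0:ℝ) ≤ Sa := Finset.sum_nonneg fun _ _ => sq_nonneg _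
    positivity
  have hrsq : φ⁻¹ ^ 2 * Sc + Sa ≤ r ^ 2 := by
    have hs := hri i hi1 (le_of_lt hi)
    rw [hs] at hrlo
    nlinarith [Real.sq_sqrt hA0, Real.sqrt_nonneg (φ⁻¹ ^ 2 * Sc + Sa)]
  -- split the sphere sum along the permutation
  have hzsum : ∑ m' ∈ Finset.univ.filter (fun m' : Fin R => (m' : ℕ) < i), (z (τ m')) ^ 2 +
      ∑ m' ∈ Finset.univ.filter (fun m' : Fin R => i ≤ (m' : ℕ)), (z (τ m')) ^ 2 = r ^ 2 := by
    have h1 : ∑ m' : Fin R, (z (τ m')) ^ 2 = r ^ 2 := by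
      rw [Equiv.sum_comp τ (fun j => (z j) ^ 2)]; exact hz_sphere
    have h2 := Finset.sum_filter_add_sum_filter_not Finset.univ
      (fun m' : Fin R => (m' : ℕ) < i) (fun m' => (z (τ m')) ^ 2)
    have h3 : Finset.univ.filter (fun m' : Fin R => ¬ (m' : ℕ) < i) =
        Finset.univ.filter (fun m' : Fin R => i ≤ (m' : ℕ)) := by
      simp only [not_lt]
    rw [h3] at h2
    linarith [h1, h2]
  -- the low part is strictly below Sa
  have hlow : ∑ m' ∈ Finset.univ.filter (fun m' : Fin R => (m' : ℕ) < i), (z (τ m')) ^ 2 < Sa := by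
    rw [hSa]
    apply Finset.sum_lt_sum
    · intro j hj
      have := (hz_box (τ j)).1
      have := (hz_box (τ j)).2
      nlinarith
    · refine ⟨m, by simp [hm], ?_⟩
      nlinarith
  -- hence the high part strictly exceeds φ⁻² Sc, so some high coordinate is big
  have hhigh : φ⁻¹ ^ 2 * Sc <
      ∑ m' ∈ Finset.univ.filter (fun m' : Fin R => i ≤ (m' : ℕ)), (z (τ m')) ^ 2 := by
    linarith
  obtain ⟨k, hk_mem, hk⟩ : ∃ k ∈ Finset.univ.filter (fun m' : Fin R => i ≤ (m' : ℕ)),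
      φ⁻¹ ^ 2 * (c (τ k)) ^ 2 < (z (τ k)) ^ 2 := by
    apply Finset.exists_lt_of_sum_lt
    rw [← Finset.mul_sum] at *
    exact hhigh
  have hk_ge : i ≤ (k : ℕ) := by simpa using hk_mem
  set q : Fin R := τ k with hq
  have hpq : p ≠ q := by
    intro h
    have : m = k := τ.injective h
    have hmk : (m : ℕ) = (k : ℕ) := by rw [this]
    omega
  have hzq0 : 0 ≤ z q := (hz_box q).1
  -- the ratio at p dominates φ
  have hφle : φ ≤ c p / a p := by
    apply hord m j1
    show (m : ℕ) ≤ (j1 : ℕ)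
    simp [hj1]; omega
  have hcp_ge : φ * a p ≤ c p := (le_div_iff₀ (ha p)).mp hφle
  obtain ⟨yp, yq, hsph, hyp0, hyp_lea, hyq0, hyq_le, hgain⟩ :=
    stmt3_aux_exchange (a p) (c p) (c q) (z p) (z q) φ (ha p) (hc p) (hc q)
      hzp0 hzp_lt hzq0 hφpos hk hcp_ge
  have hyq_lea : yq ≤ a q := le_trans hyq_le (hz_box q).2
  -- the perturbed point
  obtain ⟨y, hydef⟩ : ∃ y : Fin R → ℝ,
      y = Function.update (Function.update z p yp) q yq := ⟨_, rfl⟩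
  have hyP : y p = yp := by
    rw [hydef, Function.update_of_ne hpq, Function.update_self]
  have hyQ : y q = yq := by rw [hydef, Function.update_self]
  have hyO : ∀ j : Fin R, j ≠ p → j ≠ q → y j = z j := by
    intro j h1 h2
    rw [hydef, Function.update_of_ne h2, Function.update_of_ne h1]
  have hqp : q ≠ p := hpq.symm
  -- split any sum of coordinate functions at p and q
  have hsum : ∀ h : Fin R → ℝ, ∑ j, h j =
      h p + h q + ∑ j ∈ (Finset.univ.erase p).erase q, h j := by
    intro h
    rw [← Finset.add_sum_erase _ _ (Finset.mem_univ p),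
      ← Finset.add_sum_erase _ _ (Finset.mem_erase.mpr ⟨hqp, Finset.mem_univ q⟩)]
    ring
  have hEq : ∀ j ∈ (Finset.univ.erase p).erase q, y j = z j := by
    intro j hj
    rw [Finset.mem_erase, Finset.mem_erase] at hj
    exact hyO j hj.2.1 hj.1
  have hErest : ∑ j ∈ (Finset.univ.erase p).erase q, (y j) ^ 2 =
      ∑ j ∈ (Finset.univ.erase p).erase q, (z j) ^ 2 :=
    Finset.sum_congr rfl fun j hj => by rw [hEq j hj]
  have hErest2 : ∑ j ∈ (Finset.univ.erase p).erase q, c j * y j =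
      ∑ j ∈ (Finset.univ.erase p).erase q, c j * z j :=
    Finset.sum_congr rfl fun j hj => by rw [hEq j hj]
  -- y is on the sphere
  have hy_sphere : ∑ j, (y j) ^ 2 = r ^ 2 := by
    have h1 := hsum (fun j => (y j) ^ 2)
    have h2 := hsum (fun j => (z j) ^ 2)
    try simp only at h1 h2
    rw [hyP, hyQ] at h1
    rw [h1, hErest]
    rw [h2] at hz_sphere
    linarith [hsph]
  -- y is in the box
  have hy_box : ∀ j, 0 ≤ y j ∧ y j ≤ a j := by
    intro j
    by_cases h1 : j = p
    · subst h1; rw [hyP]; exact ⟨hyp0, hyp_lea⟩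
    · by_cases h2 : j = q
      · subst h2; rw [hyQ]; exact ⟨hyq0, hyq_lea⟩
      · rw [hyO j h1 h2]; exact hz_box j
  have hmax := hz_max y hy_sphere hy_box
  have hy_obj := hsum (fun j => c j * y j)
  have hz_obj := hsum (fun j => c j * z j)
  try simp only at hy_obj hz_obj
  rw [hyP, hyQ] at hy_obj
  rw [hy_obj, hz_obj, hErest2] at hmax
  linarith [hgain, hmax]
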